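/- Let V be a finite set, F ⊆ V, let w be a non-empty finite word over V that is an {F}-burden, let v ∈ F, and let ρ be an infinite sequence over V in which v appears at most once. Then maxscore_{{F}}(wρ) ≤ 2, i.e., score_F(wx) ≤ 2 for every finite prefix x of ρ. -/

import Mathlib

/- Common definitions for finite-time Muller games, following
   McNaughton / Fearnley-Zimmermann. -/

universe u

variable {V : Type u}

/-- The occurrence set of a finite word: the set of letters occurring in it. -/
def occ (x : List V) : Set V := {v | v ∈ x}

/-- `score F w` is the maximal `k` such that some suffix of `w` decomposes as
`x₁ ⋯ x_k` with every `xᵢ` non-empty and `occ xᵢ = F` (with `max ∅ = 0`). -/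
noncomputable def score (F : Set V) (w : List V) : ℕ :=
  sSup {k | ∃ xs : List (List V), xs.length = k ∧
    (∀ x ∈ xs, x ≠ [] ∧ occ x = F) ∧ xs.flatten <:+ w}

/-- `maxscore 𝓕 w` is the maximum of `score F u` over `F ∈ 𝓕` and non-empty
prefixes `u` of `w`. -/
noncomputable def maxscore (𝓕 : Set (Set V)) (w : List V) : ℕ :=
  sSup {n | ∃ F ∈ 𝓕, ∃ u : List V, u ≠ [] ∧ u <+: w ∧ n = score F u}

/-- `AccGood F w x` : `x` is a suffix of `w` with `occ x ⊆ F` such that removing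
any suffix `y` of `x` from `w` does not change the score of `F`. -/
def AccGood (F : Set V) (w x : List V) : Prop :=
  x <:+ w ∧ occ x ⊆ F ∧
    ∀ y : List V, y <:+ x → score F (w.take (w.length - y.length)) = score F w

/-- The accumulator `acc F w` : the occurrence set of the longest suffix `x` of `w`
with `occ x ⊆ F` such that the score of `F` did not change during `x`. -/
noncomputable def acc (F : Set V) (w : List V) : Set V :=
  occ (w.drop (sInf {i | AccGood F w (w.drop i)}))

/-- A non-empty word `w` is an `𝓕`-burden if `maxscore 𝓕 w ≤ 2` and for every
`F ∈ 𝓕` either `score F w = 0`, or `score F w = 1` and `acc F w = ∅`. -/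
def Burden (𝓕 : Set (Set V)) (w : List V) : Prop :=
  w ≠ [] ∧ maxscore 𝓕 w ≤ 2 ∧
    ∀ F ∈ 𝓕, score F w = 0 ∨ (score F w = 1 ∧ acc F w = ∅)

/-- The maxscore of an infinite sequence: the supremum (in `ℕ∞`) of the scores of
sets `F ∈ 𝓕` over all non-empty finite prefixes. -/
noncomputable def maxscoreInf (𝓕 : Set (Set V)) (ρ : ℕ → V) : ℕ∞ :=
  ⨆ F ∈ 𝓕, ⨆ n : ℕ, (score F ((List.range (n + 1)).map ρ) : ℕ∞)

/-- The set of elements occurring infinitely often in the sequence `ρ`. -/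
def limitSet (ρ : ℕ → V) : Set V := {v | ∀ N : ℕ, ∃ n, N ≤ n ∧ ρ n = v}

/-- The indicator of a play: the union of all `F ∈ 𝓕` with positive score
together with all non-empty accumulators of members of `𝓕`. -/
noncomputable def ind (𝓕 : Set (Set V)) (w : List V) : Set V :=
  (⋃ F ∈ {F ∈ 𝓕 | 0 < score F w}, F) ∪ ⋃ F ∈ {F ∈ 𝓕 | acc F w ≠ ∅}, acc F w

/-- An arena: a finite directed graph together with the set `V0` of vertices of
Player 0 (Player 1 owns the complement), where every vertex has a successor. -/
structure Arena (V : Type u) where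
  V0 : Set V
  E : V → V → Prop
  exists_succ : ∀ v, ∃ u, E v u

/-- The positions of Player `i`. -/
def Arena.pos (G : Arena V) (i : Fin 2) : Set V :=
  if i = 0 then G.V0 else G.V0ᶜ

/-- A strategy maps a history (the play so far, excluding the current vertex)
and the current vertex to a successor vertex. -/
abbrev Strategy (V : Type u) := List V → V → V

/-- A strategy is legal if it always moves along edges. -/
def Arena.Legal (G : Arena V) (σ : Strategy V) : Prop :=
  ∀ w v, G.E v (σ w v)

/-- An infinite play in `G` starting in `v`. -/
def Arena.IsPlay (G : Arena V) (v : V) (ρ : ℕ → V) : Prop :=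
  ρ 0 = v ∧ ∀ n, G.E (ρ n) (ρ (n + 1))

/-- An infinite play is consistent with the strategy `σ` of Player `i`. -/
def Arena.ConsistentInf (G : Arena V) (i : Fin 2) (σ : Strategy V) (ρ : ℕ → V) : Prop :=
  ∀ n, ρ n ∈ G.pos i → ρ (n + 1) = σ ((List.range n).map ρ) (ρ n)

/-- Player `i` (with winning condition `𝓕i`) wins the Muller game from `v`. -/
def Arena.MullerWinFrom (G : Arena V) (i : Fin 2) (𝓕i : Set (Set V)) (v : V) : Prop :=
  ∃ σ : Strategy V, G.Legal σ ∧
    ∀ ρ : ℕ → V, G.IsPlay v ρ → G.ConsistentInf i σ ρ → limitSet ρ ∈ 𝓕i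

/-- The winning region of Player `i` in the Muller game. -/
def Arena.MullerWinRegion (G : Arena V) (i : Fin 2) (𝓕i : Set (Set V)) : Set V :=
  {v | G.MullerWinFrom i 𝓕i v}

/-- A finite play is consistent with the strategy `σ` of Player `i`. -/
def Arena.ConsistentFin (G : Arena V) (i : Fin 2) (σ : Strategy V) (w : List V) : Prop :=
  ∀ (u : List V) (v x : V), u ++ [v, x] <+: w → v ∈ G.pos i → x = σ u v

/-- A play of the finite-time Muller game with threshold `k`: a finite path
whose maxscore (over all subsets) is exactly `k`, while the maxscore of
its proper prefixes is `< k`. -/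
def FTPlay (G : Arena V) (k : ℕ) (w : List V) : Prop :=
  w.Chain' G.E ∧ maxscore (Set.univ : Set (Set V)) w = k ∧
    maxscore (Set.univ : Set (Set V)) w.dropLast < k

/-- Player `i` wins the finite-time Muller game with threshold `k` from `v`. -/
def FTWinFrom (G : Arena V) (i : Fin 2) (𝓕i : Set (Set V)) (k : ℕ) (v : V) : Prop :=
  ∃ σ : Strategy V, G.Legal σ ∧
    ∀ w : List V, FTPlay G k w → w.head? = some v → G.ConsistentFin i σ w →
      ∃ F ∈ 𝓕i, score F w = k

/-- The winning region of Player `i` in the finite-time Muller game. -/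
def FTWinRegion (G : Arena V) (i : Fin 2) (𝓕i : Set (Set V)) (k : ℕ) : Set V :=
  {v | FTWinFrom G i 𝓕i k v}

/-- A play of McNaughton's finite-time Muller game: a finite path such that some
set `F` reaches score `|F|! + 1`, while no set did so in a proper prefix. -/
def McNPlay (G : Arena V) (w : List V) : Prop :=
  w.Chain' G.E ∧ (∃ F : Set V, score F w = F.ncard.factorial + 1) ∧
    ∀ u : List V, u <+: w → u ≠ w →
      ∀ F : Set V, score F u ≠ F.ncard.factorial + 1

/-- Player `i` wins McNaughton's finite-time Muller game from `v`. -/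
def McNWinFrom (G : Arena V) (i : Fin 2) (𝓕i : Set (Set V)) (v : V) : Prop :=
  ∃ σ : Strategy V, G.Legal σ ∧
    ∀ w : List V, McNPlay G w → w.head? = some v → G.ConsistentFin i σ w →
      ∃ F ∈ 𝓕i, score F w = F.ncard.factorial + 1

/-- The winning region of Player `i` in McNaughton's finite-time Muller game. -/
def McNWinRegion (G : Arena V) (i : Fin 2) (𝓕i : Set (Set V)) : Set V :=
  {v | McNWinFrom G i 𝓕i v}

open Classical in
/-- The list `ρ₀ ⋯ ρₙ` of the first `n+1` vertices of the unique play that starts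
in `v` and is consistent with the strategy `σ` of Player `i` and the strategy `τ`
of the other player. -/
noncomputable def playList (G : Arena V) (i : Fin 2) (σ τ : Strategy V) (v : V) :
    ℕ → List V
  | 0 => [v]
  | n + 1 =>
      let w := playList G i σ τ v n
      let u := w.getLastD v
      w ++ [if u ∈ G.pos i then σ w.dropLast u else τ w.dropLast u]

/-- `playOf G i σ τ v` : the unique play starting in `v` that is consistent with
the strategy `σ` of Player `i` and the strategy `τ` of the other player. -/
noncomputable def playOf (G : Arena V) (i : Fin 2) (σ τ : Strategy V) (v : V)
    (n : ℕ) : V :=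
  (playList G i σ τ v n).getLastD v

section Stmt7Helpers

variable {V : Type u}

/-- Auxiliary: a decomposition of a suffix of `w` into `k` blocks with occurrence set `F`. -/
def Decomp7 (F : Set V) (w : List V) (k : ℕ) : Prop :=
  ∃ xs : List (List V), xs.length = k ∧
    (∀ x ∈ xs, x ≠ [] ∧ occ x = F) ∧ xs.flatten <:+ w

lemma score_eq_sSup7 (F : Set V) (w : List V) :
    score F w = sSup {k | Decomp7 F w k} := rfl

lemma occ_append7 (a b : List V) : occ (a ++ b) = occ a ∪ occ b := by
  ext u; simp [occ]

lemma occ_subset7 {a b : List V} (h : ∀ u ∈ a, u ∈ b) : occ a ⊆ occ b := by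
  intro u hu; exact h u hu

lemma occ_flatten7 {F : Set V} : ∀ {xs : List (List V)}, xs ≠ [] →
    (∀ x ∈ xs, occ x = F) → occ xs.flatten = F := by
  intro xs
  induction xs with
  | nil => intro h; exact absurd rfl h
  | cons a l ih =>
    intro _ hF
    rcases eq_or_ne l [] with rfl | hl
    · simp [hF a (by simp)]
    · rw [List.flatten_cons, occ_append7, hF a (by simp),
        ih hl (fun x hx => hF x (by simp [hx]))]
      simp

lemma flatten_ne_nil7 {xs : List (List V)} (h : xs ≠ [])
    (h2 : ∀ x ∈ xs, x ≠ []) : xs.flatten ≠ [] := by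
  rcases xs with _ | ⟨a, l⟩
  · exact absurd rfl h
  · simp only [List.flatten_cons, ne_eq, List.append_eq_nil_iff]
    intro ⟨ha, _⟩
    exact h2 a (by simp) ha

lemma decomp_zero7 (F : Set V) (w : List V) : Decomp7 F w 0 :=
  ⟨[], rfl, by simp, by simp⟩

lemma decomp_length_le7 {F : Set V} {w : List V} {k : ℕ} (h : Decomp7 F w k) :
    k ≤ w.length := by
  obtain ⟨xs, hlen, hb, hs⟩ := h
  have h1 : xs.length ≤ xs.flatten.length := by
    clear hlen hs
    induction xs with
    | nil => simp
    | cons a l ih =>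
      have ha : a ≠ [] := (hb a (by simp)).1
      have : 1 ≤ a.length := List.length_pos_iff.mpr ha
      simp only [List.flatten_cons, List.length_append, List.length_cons]
      have := ih (fun x hx => hb x (by simp [hx]))
      omega
  have h2 : xs.flatten.length ≤ w.length := hs.length_le
  omega

lemma bddAbove7 (F : Set V) (w : List V) : BddAbove {k | Decomp7 F w k} :=
  ⟨w.length, fun _ hk => decomp_length_le7 hk⟩

lemma le_score7 {F : Set V} {w : List V} {k : ℕ} (h : Decomp7 F w k) :
    k ≤ score F w :=
  le_csSup (bddAbove7 F w) h

lemma score_le7 {F : Set V} {w : List V} {m : ℕ}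
    (h : ∀ k, Decomp7 F w k → k ≤ m) : score F w ≤ m :=
  csSup_le ⟨0, decomp_zero7 F w⟩ h

lemma decomp_mono7 {F : Set V} {w : List V} {k m : ℕ} (h : Decomp7 F w k)
    (hm : m ≤ k) : Decomp7 F w m := by
  rcases Nat.eq_zero_or_pos m with rfl | hm0
  · exact decomp_zero7 F w
  obtain ⟨xs, hlen, hb, hs⟩ := h
  refine ⟨(xs.take (k - m + 1)).flatten :: xs.drop (k - m + 1), ?_, ?_, ?_⟩
  · simp only [List.length_cons, List.length_drop, hlen]; omega
  · intro x hx
    rcases List.mem_cons.mp hx with rfl | hx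
    · have hne : xs.take (k - m + 1) ≠ [] := by
        intro h0
        have := congrArg List.length h0
        simp [hlen] at this
        omega
      refine ⟨flatten_ne_nil7 hne (fun y hy => (hb y (List.mem_of_mem_take hy)).1),
        occ_flatten7 hne (fun y hy => (hb y (List.mem_of_mem_take hy)).2)⟩
    · exact hb x (List.mem_of_mem_drop hx)
  · have : ((xs.take (k - m + 1)).flatten :: xs.drop (k - m + 1)).flatten
        = xs.flatten := by
      rw [List.flatten_cons, ← List.flatten_append, List.take_append_drop]
    rw [this]; exact hs

end Stmt7Helpers
/-- Let `w` be an `{F}`-burden, let `v ∈ F`, and let `ρ` be an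
infinite sequence in which `v` appears at most once. Then
`maxscore_{{F}}(wρ) ≤ 2`, i.e., `score F (w x) ≤ 2` for every finite prefix `x`
of `ρ`. -/
theorem stmt_7 {V : Type u} [Fintype V] (F : Set V) (w : List V)
    (hw : Burden {F} w) (v : V) (hv : v ∈ F) (ρ : ℕ → V)
    (hρ : ∀ m n : ℕ, ρ m = v → ρ n = v → m = n) :
    ∀ n : ℕ, score F (w ++ (List.range n).map ρ) ≤ 2 := by
  obtain ⟨hwne, -, hsc⟩ := hw
  have hF := hsc F rfl
  intro n
  set x := (List.range n).map ρ with hxdef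
  have hvv : ¬ List.Sublist [v, v] x := by
    intro h
    rw [hxdef, List.sublist_map_iff] at h
    obtain ⟨l, hl, hmap⟩ := h
    have hlen2 : l.length = 2 := by
      have := congrArg List.length hmap
      simpa using this.symm
    obtain ⟨i, j, rfl⟩ := List.length_eq_two.mp hlen2
    simp only [List.map_cons, List.map_nil, List.cons.injEq, and_true] at hmap
    have hnd := hl.nodup (List.nodup_range)
    simp only [List.nodup_cons, List.mem_singleton] at hnd
    exact hnd.1 (hρ i j hmap.1.symm hmap.2.symm)
  rw [score_eq_sSup7]
  apply csSup_le ⟨0, by exact decomp_zero7 F _⟩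
  intro k hk
  replace hk : Decomp7 F (w ++ x) k := hk
  by_contra hk2
  push_neg at hk2
  have h3 : Decomp7 F (w ++ x) 3 := decomp_mono7 hk (by omega)
  obtain ⟨xs, hlen, hb, hs⟩ := h3
  obtain ⟨x₁, x₂, x₃, rfl⟩ := List.length_eq_three.mp hlen
  have h1 := hb x₁ (by simp)
  have h2 := hb x₂ (by simp)
  have h3' := hb x₃ (by simp)
  obtain ⟨t, ht⟩ := hs
  simp only [List.flatten_cons, List.flatten_nil, List.append_nil] at ht
  rcases le_or_gt (t.length + x₁.length + x₂.length) w.length with hA | hA'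
  · -- Case A : x₁ and x₂ lie entirely inside w, so score F w ≥ 2
    have hAeq : (t ++ x₁ ++ x₂) ++ x₃ = w ++ x := by
      simpa [List.append_assoc] using ht
    have hAlen : (t ++ x₁ ++ x₂).length ≤ w.length := by
      simp only [List.length_append]; omega
    have hAw : (w ++ x).take (t ++ x₁ ++ x₂).length = t ++ x₁ ++ x₂ := by
      rw [← hAeq, List.take_left]
    have hAw2 : w.take (t ++ x₁ ++ x₂).length = t ++ x₁ ++ x₂ := by
      rw [← List.take_append_of_le_length hAlen (l₂ := x), hAw]
    have hwA : (t ++ x₁ ++ x₂) ++ w.drop (t ++ x₁ ++ x₂).length = w := by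
      have h0 := List.take_append_drop (t ++ x₁ ++ x₂).length w
      rw [hAw2] at h0; exact h0
    set r := w.drop (t ++ x₁ ++ x₂).length with hrdef
    have hx3 : x₃ = r ++ x := by
      apply List.append_cancel_left (as := t ++ x₁ ++ x₂)
      rw [hAeq, ← hwA, List.append_assoc]
    have hoccr : occ r ⊆ F := by
      intro u hu
      rw [← h3'.2, hx3]
      exact Set.mem_setOf_eq ▸ List.mem_append_left _ hu
    have hd2 : Decomp7 F w 2 := by
      refine ⟨[x₁, x₂ ++ r], rfl, ?_, ⟨t, ?_⟩⟩
      · intro z hz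
        rcases List.mem_cons.mp hz with rfl | hz
        · exact h1
        · simp only [List.mem_singleton] at hz; subst hz
          refine ⟨by simp [h2.1], ?_⟩
          rw [occ_append7, h2.2]
          exact Set.union_eq_self_of_subset_right hoccr
      · simp only [List.flatten_cons, List.flatten_nil, List.append_nil,
          ← List.append_assoc]
        exact hwA
    have := le_score7 hd2
    rcases hF with h0 | ⟨h1', _⟩ <;> omega
  rcases le_or_gt w.length (t.length + x₁.length) with hC | hB
  · -- Case C : x₂ and x₃ lie entirely in x, contradicting that v occurs once
    have hCeq : (t ++ x₁) ++ (x₂ ++ x₃) = w ++ x := by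
      simpa [List.append_assoc] using ht
    have hxs : x₂ ++ x₃ <:+ x := by
      refine ⟨(t ++ x₁).drop w.length, ?_⟩
      rw [← List.drop_append_of_le_length (by simpa using hC), hCeq, List.drop_left]
    have hv2 : v ∈ x₂ := by rw [← h2.2] at hv; exact hv
    have hv3 : v ∈ x₃ := by rw [← h3'.2] at hv; exact hv
    exact hvv (((List.singleton_sublist.mpr hv2).append
      (List.singleton_sublist.mpr hv3)).trans hxs.sublist)
  · -- Case B : x₂ straddles the border, contradicting acc F w = ∅
    have hBeq : (t ++ x₁) ++ (x₂ ++ x₃) = w ++ x := by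
      simpa [List.append_assoc] using ht
    set p := x₂.take (w.length - (t ++ x₁).length) with hpdef
    have hBlen : (t ++ x₁).length = t.length + x₁.length := by simp
    have hplen : p.length = w.length - (t ++ x₁).length := by
      rw [hpdef, List.length_take]; simp; omega
    have hpne : p ≠ [] := by
      intro h0
      have := congrArg List.length h0
      rw [hplen] at this
      simp only [List.length_nil, hBlen] at this
      omega
    have hwB : w = (t ++ x₁) ++ p := by
      have h1' : (w ++ x).take w.length = w := List.take_left' rfl
      have h2' : ((t ++ x₁) ++ (x₂ ++ x₃)).take w.length = (t ++ x₁) ++ p := by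
        rw [List.take_append,
          List.take_of_length_le (by simp; omega),
          List.take_append_of_le_length (by simp at hA' ⊢; omega)]
      rw [← h1', ← hBeq, h2']
    have hoccp : occ p ⊆ F := by
      intro u hu
      rw [← h2.2]
      exact List.take_subset _ _ hu
    have hs1 : 1 ≤ score F w := by
      apply le_score7
      refine ⟨[x₁ ++ p], rfl, ?_, ⟨t, ?_⟩⟩
      · intro z hz
        simp only [List.mem_singleton] at hz; subst hz
        refine ⟨by simp [h1.1], ?_⟩
        rw [occ_append7, h1.2]
        exact Set.union_eq_self_of_subset_right hoccp
      · simp only [List.flatten_cons, List.flatten_nil, List.append_nil,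
          ← List.append_assoc]
        exact hwB.symm
    rcases hF with h0 | ⟨hsw, hacc⟩
    · omega
    have hAG : AccGood F w p := by
      refine ⟨⟨t ++ x₁, hwB.symm⟩, hoccp, ?_⟩
      intro y hy
      obtain ⟨p', hp'⟩ := hy
      obtain ⟨s, hsy⟩ : y <:+ w :=
        ⟨(t ++ x₁) ++ p', by rw [List.append_assoc, hp']; exact hwB.symm⟩
      have hslen : s.length = w.length - y.length := by
        have := congrArg List.length hsy
        simp only [List.length_append] at this
        omega
      have htake : w.take (w.length - y.length) = s := by
        rw [← hslen, ← hsy, List.take_left]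
      have hsB : s = (t ++ x₁) ++ p' := by
        apply List.append_cancel_right (bs := y)
        rw [hsy, hwB, ← hp']
        simp [List.append_assoc]
      have hoccp' : occ p' ⊆ F := by
        intro u hu
        exact hoccp (by rw [← hp']; exact List.mem_append_left _ hu)
      have hoccy : occ y ⊆ F := by
        intro u hu
        exact hoccp (by rw [← hp']; exact List.mem_append_right _ hu)
      have hs_ge : 1 ≤ score F s := by
        apply le_score7
        refine ⟨[x₁ ++ p'], rfl, ?_, ⟨t, ?_⟩⟩
        · intro z hz
          simp only [List.mem_singleton] at hz; subst hz
          refine ⟨by simp [h1.1], ?_⟩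
          rw [occ_append7, h1.2]
          exact Set.union_eq_self_of_subset_right hoccp'
        · simp only [List.flatten_cons, List.flatten_nil, List.append_nil,
            ← List.append_assoc]
          exact hsB.symm
      have hs_le : score F s ≤ 1 := by
        apply score_le7
        intro k' hk'
        by_contra hk'2
        push_neg at hk'2
        obtain ⟨zs, hzlen, hzb, hzs⟩ := decomp_mono7 hk' (show 2 ≤ k' by omega)
        obtain ⟨z₁, z₂, rfl⟩ := List.length_eq_two.mp hzlen
        obtain ⟨uu, huu⟩ := hzs
        simp only [List.flatten_cons, List.flatten_nil, List.append_nil] at huu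
        have hz1 := hzb z₁ (by simp)
        have hz2 := hzb z₂ (by simp)
        have hd2 : Decomp7 F w 2 := by
          refine ⟨[z₁, z₂ ++ y], rfl, ?_, ⟨uu, ?_⟩⟩
          · intro z hz
            rcases List.mem_cons.mp hz with rfl | hz
            · exact hz1
            · simp only [List.mem_singleton] at hz; subst hz
              refine ⟨by simp [hz2.1], ?_⟩
              rw [occ_append7, hz2.2]
              exact Set.union_eq_self_of_subset_right hoccy
          · simp only [List.flatten_cons, List.flatten_nil, List.append_nil]
            have : uu ++ (z₁ ++ (z₂ ++ y)) = (uu ++ (z₁ ++ z₂)) ++ y := by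
              simp [List.append_assoc]
            rw [this, huu, hsy]
        have := le_score7 hd2
        omega
      rw [htake, hsw]
      omega
    have hBl : w.length - p.length = (t ++ x₁).length := by
      rw [hwB]; simp; omega
    have hdrop : w.drop (w.length - p.length) = p := by
      rw [hBl]
      conv_lhs => rw [hwB]
      exact List.drop_left
    have hmem : (w.length - p.length) ∈ {i | AccGood F w (w.drop i)} := by
      simp only [Set.mem_setOf_eq, hdrop]
      exact hAG
    have hinf : sInf {i | AccGood F w (w.drop i)} ≤ w.length - p.length :=
      Nat.sInf_le hmem
    have hppos : 1 ≤ p.length := List.length_pos_iff.mpr hpne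
    have hwlen : w.length = t.length + x₁.length + p.length := by
      rw [hwB]; simp; omega
    have hne' : w.drop (sInf {i | AccGood F w (w.drop i)}) ≠ [] := by
      apply List.ne_nil_of_length_pos
      rw [List.length_drop]
      omega
    obtain ⟨a, ha⟩ := List.exists_mem_of_ne_nil _ hne'
    have hmem2 : a ∈ acc F w := ha
    rw [hacc] at hmem2
    exact hmem2
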